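/- arXiv:2405.09434 — 6 statements merged into one kernel-verified Lean document; each statement's English description precedes it below -/
import Mathlib

section
/- Let Γ = ⟨σ₁, …, σₙ⟩ be a group in which the subgroup ⟨σ₁, …, σ_{n-1}⟩ satisfies the rotation relations, and define τᵢ = σ₁σ₂⋯σᵢ for 1 ≤ i ≤ n. Then the set of relations {σₙ^{pₙ} = 1, (σᵢ⋯σₙ)² = 1 for 1 ≤ i ≤ n-1} holds if and only if the set of relations {(τ_{n-1}⁻¹τₙ)^{pₙ} = 1, τₙ² = 1, (τᵢ⁻¹τₙ)² = 1 for 1 ≤ i ≤ n-2} holds. -/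
/-- The ordered product `σ i * σ (i+1) * ⋯ * σ j`. -/
def sprod {G : Type*} [Group G] (σ : ℕ → G) (i j : ℕ) : G :=
  ((List.range (j + 1 - i)).map (fun k => σ (i + k))).prod

lemma sprod_mul {G : Type*} [Group G] (σ : ℕ → G) (i j m : ℕ)
    (h1 : i ≤ j + 1) (h2 : j ≤ m) :
    sprod σ i j * sprod σ (j + 1) m = sprod σ i m := by
  unfold sprod
  have h : m + 1 - i = (j + 1 - i) + (m + 1 - (j + 1)) := by omega
  rw [h, List.range_add, List.map_append, List.prod_append]
  congr 1
  rw [List.map_map]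
  apply congrArg
  apply List.map_congr_left
  intro k _
  simp only [Function.comp]
  congr 1
  omega

lemma sprod_self {G : Type*} [Group G] (σ : ℕ → G) (i : ℕ) :
    sprod σ i i = σ i := by
  simp [sprod, List.range_succ]

lemma inv_sprod {G : Type*} [Group G] (σ : ℕ → G) (i m : ℕ)
    (h2 : i ≤ m) :
    (sprod σ 1 i)⁻¹ * sprod σ 1 m = sprod σ (i + 1) m := by
  rw [inv_mul_eq_iff_eq_mul]
  exact (sprod_mul σ 1 i m (by omega) h2).symm

/-- **Corollary 2.4**: with `τᵢ = σ₁⋯σᵢ`, the relations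
`σₙ^{pₙ} = 1` and `(σᵢ⋯σₙ)² = 1` (`1 ≤ i ≤ n-1`) are equivalent to the relations
`(τ_{n-1}⁻¹ τₙ)^{pₙ} = 1`, `τₙ² = 1`, and `(τᵢ⁻¹ τₙ)² = 1` (`1 ≤ i ≤ n-2`),
assuming `⟨σ₁, …, σ_{n-1}⟩` satisfies the rotation relations. -/
theorem relations_in_terms_of_taus {G : Type*} [Group G] (n : ℕ) (hn : 2 ≤ n)
    (σ : ℕ → G) (p : ℕ → ℕ) (hp : ∀ i, 3 ≤ p i)
    (hσp : ∀ i, 1 ≤ i → i ≤ n - 1 → σ i ^ p i = 1)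
    (hrel : ∀ i j, 1 ≤ i → i < j → j ≤ n - 1 → (sprod σ i j) ^ 2 = 1) :
    (σ n ^ p n = 1 ∧ ∀ i, 1 ≤ i → i ≤ n - 1 → (sprod σ i n) ^ 2 = 1) ↔
    (((sprod σ 1 (n - 1))⁻¹ * sprod σ 1 n) ^ p n = 1 ∧
      (sprod σ 1 n) ^ 2 = 1 ∧
      ∀ i, 1 ≤ i → i ≤ n - 2 → ((sprod σ 1 i)⁻¹ * sprod σ 1 n) ^ 2 = 1) := by
  have key : (sprod σ 1 (n - 1))⁻¹ * sprod σ 1 n = σ n := by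
    rw [inv_sprod σ (n - 1) n (by omega)]
    have : n - 1 + 1 = n := by omega
    rw [this, sprod_self]
  constructor
  · rintro ⟨h1, h2⟩
    refine ⟨by rw [key]; exact h1, h2 1 le_rfl (by omega), ?_⟩
    intro i hi1 hi2
    rw [inv_sprod σ i n (by omega)]
    exact h2 (i + 1) (by omega) (by omega)
  · rintro ⟨h1, h2, h3⟩
    refine ⟨by rw [key] at h1; exact h1, ?_⟩
    intro i hi1 hi2
    rcases Nat.eq_or_lt_of_le hi1 with h | h
    · rw [← h]; exact h2
    · have := h3 (i - 1) (by omega) (by omega)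
      rw [inv_sprod σ (i - 1) n (by omega)] at this
      have hi : i - 1 + 1 = i := by omega
      rwa [hi] at this
end

section
/- With the monodromy permutations rᵢ on F = Sₙ × {±1}ⁿ × (ℤⁿ/Λ) as defined, we have (r₀r₁)⁴ = id, (r_{n−1}rₙ)⁴ = id, and (rᵢr_{i+1})³ = id for 1 ≤ i ≤ n−2. -/
/-- The set of flags of the combinatorial cubic toroid `{4,3^{n-2},4}/Λ`:
a flag is a triple `(σ, x, t)` with `σ ∈ Sₙ`, `x ∈ {±1}ⁿ` and `t ∈ ℤⁿ/Λ`. -/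
abbrev TFlag (n : ℕ) (Λ : Submodule ℤ (Fin n → ℤ)) :=
  Equiv.Perm (Fin n) × (Fin n → ℤˣ) × ((Fin n → ℤ) ⧸ Λ)

/-- The class in `ℤⁿ/Λ` of the `k`-th standard basis vector. -/
def eQ {n : ℕ} (Λ : Submodule ℤ (Fin n → ℤ)) (k : Fin n) : (Fin n → ℤ) ⧸ Λ :=
  Submodule.Quotient.mk (Pi.single k 1)

/-- Flip the sign of `x` at position `k`. -/
def flipAt {n : ℕ} (x : Fin n → ℤˣ) (k : Fin n) : Fin n → ℤˣ :=
  Function.update x k (-(x k))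

/-- The monodromy generators `r₀, …, rₙ` of the cubic toroid, acting on flags
(indices of positions are `0`-based: position `0` plays the role of `1`, position
`n-1` the role of `n`):
`r₀(σ,x,t) = (σ, x^{(1σ)}, t)`, `rᵢ(σ,x,t) = ((i i+1)σ, x, t)` for `1 ≤ i ≤ n-1`, and
`rₙ(σ,x,t) = (σ, x^{(nσ)}, t − x_{nσ} e_{nσ})`. -/
noncomputable def rGen {n : ℕ} (Λ : Submodule ℤ (Fin n → ℤ)) (hn : 2 ≤ n) (i : ℕ) :
    TFlag n Λ → TFlag n Λ := fun Φ =>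
  if i = 0 then
    (Φ.1, flipAt Φ.2.1 (Φ.1 ⟨0, by omega⟩), Φ.2.2)
  else if h : 1 ≤ i ∧ i ≤ n - 1 then
    (Equiv.swap (⟨i - 1, by omega⟩ : Fin n) ⟨i, by omega⟩ * Φ.1, Φ.2.1, Φ.2.2)
  else if i = n then
    (Φ.1, flipAt Φ.2.1 (Φ.1 ⟨n - 1, by omega⟩),
      Φ.2.2 - ((Φ.2.1 (Φ.1 ⟨n - 1, by omega⟩) : ℤ)) • eQ Λ (Φ.1 ⟨n - 1, by omega⟩))
  else Φ


section Aux

variable {n : ℕ} (Λ : Submodule ℤ (Fin n → ℤ))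

lemma rGen_zero (hn : 2 ≤ n) (Φ : TFlag n Λ) :
    rGen Λ hn 0 Φ = (Φ.1, flipAt Φ.2.1 (Φ.1 ⟨0, by omega⟩), Φ.2.2) := by
  simp [rGen]

lemma rGen_mid (hn : 2 ≤ n) (i : ℕ) (h1 : 1 ≤ i) (h2 : i ≤ n - 1) (Φ : TFlag n Λ) :
    rGen Λ hn i Φ = (Equiv.swap (⟨i - 1, by omega⟩ : Fin n) ⟨i, by omega⟩ * Φ.1,
      Φ.2.1, Φ.2.2) := by
  unfold rGen
  rw [if_neg (by omega), dif_pos ⟨h1, h2⟩]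

lemma rGen_top (hn : 2 ≤ n) (Φ : TFlag n Λ) :
    rGen Λ hn n Φ = (Φ.1, flipAt Φ.2.1 (Φ.1 ⟨n - 1, by omega⟩),
      Φ.2.2 - ((Φ.2.1 (Φ.1 ⟨n - 1, by omega⟩) : ℤ)) • eQ Λ (Φ.1 ⟨n - 1, by omega⟩)) := by
  unfold rGen
  rw [if_neg (by omega), dif_neg (by omega), if_pos rfl]

lemma flipAt_same (x : Fin n → ℤˣ) (k : Fin n) : flipAt x k k = -(x k) := by
  simp [flipAt]

lemma flipAt_ne (x : Fin n → ℤˣ) {j k : Fin n} (h : j ≠ k) : flipAt x k j = x j := by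
  simp [flipAt, Function.update_of_ne h]

lemma flip2 (x : Fin n → ℤˣ) (k : Fin n) : flipAt (flipAt x k) k = x := by
  funext j
  by_cases h : j = k
  · subst h; simp [flipAt_same]
  · simp [flipAt_ne _ h]

lemma flip_comm (x : Fin n → ℤˣ) {j k : Fin n} (h : j ≠ k) :
    flipAt (flipAt x j) k = flipAt (flipAt x k) j := by
  funext m
  by_cases h1 : m = j
  · subst h1; simp [flipAt_same, flipAt_ne _ h, flipAt_ne _ h.symm]
  · by_cases h2 : m = k
    · subst h2; simp [flipAt_same, flipAt_ne _ h, flipAt_ne _ h.symm]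
    · simp [flipAt_ne _ h1, flipAt_ne _ h2]

lemma flip4 (x : Fin n → ℤˣ) (p q : Fin n) :
    flipAt (flipAt (flipAt (flipAt x p) q) p) q = x := by
  by_cases h : p = q
  · subst h; rw [flip2, flip2]
  · rw [flip_comm _ (Ne.symm h), flip2, flip2]

lemma swap_cube_apply {α} [DecidableEq α] {a b c : α} (hab : a ≠ b) (hbc : b ≠ c)
    (hac : a ≠ c) (σ : Equiv.Perm α) :
    Equiv.swap a b * (Equiv.swap b c * (Equiv.swap a b * (Equiv.swap b c *
      (Equiv.swap a b * (Equiv.swap b c * σ))))) = σ := by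
  ext z
  simp only [Equiv.Perm.mul_apply]
  by_cases hza : σ z = a
  · rw [hza, Equiv.swap_apply_of_ne_of_ne hab hac, Equiv.swap_apply_left,
      Equiv.swap_apply_left, Equiv.swap_apply_of_ne_of_ne hac.symm hbc.symm,
      Equiv.swap_apply_right, Equiv.swap_apply_right]
  · by_cases hzb : σ z = b
    · rw [hzb, Equiv.swap_apply_left, Equiv.swap_apply_of_ne_of_ne hac.symm hbc.symm,
        Equiv.swap_apply_right, Equiv.swap_apply_right,
        Equiv.swap_apply_of_ne_of_ne hab hac, Equiv.swap_apply_left]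
    · by_cases hzc : σ z = c
      · rw [hzc, Equiv.swap_apply_right, Equiv.swap_apply_right,
          Equiv.swap_apply_of_ne_of_ne hab hac, Equiv.swap_apply_left,
          Equiv.swap_apply_left, Equiv.swap_apply_of_ne_of_ne hac.symm hbc.symm]
      · rw [Equiv.swap_apply_of_ne_of_ne hzb hzc, Equiv.swap_apply_of_ne_of_ne hza hzb,
          Equiv.swap_apply_of_ne_of_ne hzb hzc, Equiv.swap_apply_of_ne_of_ne hza hzb,
          Equiv.swap_apply_of_ne_of_ne hzb hzc, Equiv.swap_apply_of_ne_of_ne hza hzb]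

set_option maxHeartbeats 2000000 in
lemma rel1 (hn3 : 3 ≤ n) :
    ((rGen Λ (Nat.le_of_succ_le hn3) 0 ∘ rGen Λ (Nat.le_of_succ_le hn3) 1)^[4] = (id : TFlag n Λ → TFlag n Λ)) := by
  funext Φ
  obtain ⟨σ, x, t⟩ := Φ
  simp only [Function.iterate_succ, Function.iterate_zero, Function.comp_apply, id_eq,
    Function.comp_id]
  rw [rGen_mid Λ (by omega) 1 le_rfl (by omega), rGen_zero]
  rw [rGen_mid Λ (by omega) 1 le_rfl (by omega), rGen_zero]
  rw [rGen_mid Λ (by omega) 1 le_rfl (by omega), rGen_zero]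
  rw [rGen_mid Λ (by omega) 1 le_rfl (by omega), rGen_zero]
  simp only [Equiv.swap_mul_self_mul, Equiv.Perm.mul_apply, Equiv.swap_apply_self]
  exact Prod.ext rfl (Prod.ext (flip4 x _ _) rfl)

lemma cancel_aux (x : Fin n → ℤˣ) (a b : Fin n) (t : (Fin n → ℤ) ⧸ Λ) :
    t - ((x a : ℤ)) • eQ Λ a - ((flipAt x a b : ℤ)) • eQ Λ b
      - ((flipAt (flipAt x a) b a : ℤ)) • eQ Λ a
      - ((flipAt (flipAt (flipAt x a) b) a b : ℤ)) • eQ Λ b = t := by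
  by_cases hb : b = a
  · subst hb
    simp only [flip2, flipAt_same, Units.val_neg, neg_smul, sub_neg_eq_add]
    abel
  · simp only [flipAt_ne _ hb, flipAt_ne _ (Ne.symm hb), flipAt_same, Units.val_neg,
      neg_smul, sub_neg_eq_add]
    abel

set_option maxHeartbeats 2000000 in
lemma rel2 (hn3 : 3 ≤ n) :
    ((rGen Λ (Nat.le_of_succ_le hn3) (n - 1) ∘ rGen Λ (Nat.le_of_succ_le hn3) n)^[4] =
      (id : TFlag n Λ → TFlag n Λ)) := by
  funext Φ
  obtain ⟨σ, x, t⟩ := Φ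
  simp only [Function.iterate_succ, Function.iterate_zero, Function.comp_apply, id_eq,
    Function.comp_id]
  rw [rGen_top, rGen_mid Λ (by omega) (n - 1) (by omega) le_rfl]
  rw [rGen_top, rGen_mid Λ (by omega) (n - 1) (by omega) le_rfl]
  rw [rGen_top, rGen_mid Λ (by omega) (n - 1) (by omega) le_rfl]
  rw [rGen_top, rGen_mid Λ (by omega) (n - 1) (by omega) le_rfl]
  simp only [Equiv.swap_mul_self_mul, Equiv.Perm.mul_apply, Equiv.swap_apply_self]
  exact Prod.ext rfl (Prod.ext (flip4 x _ _) (cancel_aux Λ x _ _ t))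

lemma rel3 (hn3 : 3 ≤ n) (i : ℕ) (h1 : 1 ≤ i) (h2 : i ≤ n - 2) :
    ((rGen Λ (Nat.le_of_succ_le hn3) i ∘ rGen Λ (Nat.le_of_succ_le hn3) (i + 1))^[3] =
      (id : TFlag n Λ → TFlag n Λ)) := by
  funext Φ
  obtain ⟨σ, x, t⟩ := Φ
  simp only [Function.iterate_succ, Function.iterate_zero, Function.comp_apply, id_eq,
    Function.comp_id]
  rw [rGen_mid Λ (by omega) (i + 1) (by omega) (by omega),
    rGen_mid Λ (by omega) i h1 (by omega)]
  rw [rGen_mid Λ (by omega) (i + 1) (by omega) (by omega),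
    rGen_mid Λ (by omega) i h1 (by omega)]
  rw [rGen_mid Λ (by omega) (i + 1) (by omega) (by omega),
    rGen_mid Λ (by omega) i h1 (by omega)]
  refine Prod.ext ?_ rfl
  show Equiv.swap _ _ * (Equiv.swap _ _ * (Equiv.swap _ _ * (Equiv.swap _ _ *
    (Equiv.swap _ _ * (Equiv.swap _ _ * σ))))) = σ
  have e1 : (⟨i + 1 - 1, by omega⟩ : Fin n) = ⟨i, by omega⟩ := by
    simp [Fin.ext_iff]
  rw [e1]
  exact swap_cube_apply (by simp only [ne_eq, Fin.mk.injEq]; omega)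
    (by simp only [ne_eq, Fin.mk.injEq]; omega) (by simp only [ne_eq, Fin.mk.injEq]; omega) σ

end Aux

/-- The monodromy generators of the cubic toroid satisfy the Coxeter-type relations of
`[4, 3^{n−2}, 4]`: `(r₀r₁)⁴ = id`, `(r_{n−1}rₙ)⁴ = id` and `(rᵢr_{i+1})³ = id` for
`1 ≤ i ≤ n−2`. -/
theorem rGen_coxeter_relations (n : ℕ) (hn : 3 ≤ n)
    (Λ : Submodule ℤ (Fin n → ℤ)) :
    ((rGen Λ (by omega) 0 ∘ rGen Λ (by omega) 1)^[4] = (id : TFlag n Λ → TFlag n Λ)) ∧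
    ((rGen Λ (by omega) (n - 1) ∘ rGen Λ (by omega) n)^[4] =
      (id : TFlag n Λ → TFlag n Λ)) ∧
    (∀ i, 1 ≤ i → i ≤ n - 2 →
      (rGen Λ (by omega) i ∘ rGen Λ (by omega) (i + 1))^[3] =
        (id : TFlag n Λ → TFlag n Λ)) := by
  exact ⟨rel1 Λ hn, rel2 Λ hn, fun i h1 h2 => rel3 Λ hn i h1 h2⟩
end

section
/- Let Φ = (σ, x, t) with x = (x₁,…,xₙ) and t = (t₁,…,tₙ) representing an element of ℤⁿ/Λ with a even and a ≥ 3 (so representatives are well-defined in the relevant range). Then Φ lies in the orbit of the base flag ((1), 𝟙, 0) under the subgroup ⟨r₁, …, rₙ⟩ (flags sharing the base vertex) if and only if each tᵢ ∈ {0, −1} and tᵢ = −1 exactly when xᵢ = −1. -/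
/-- The lattice `Λ_a = aℤⁿ` as a submodule of `ℤⁿ`. -/
def dvdLattice (n a : ℕ) : Submodule ℤ (Fin n → ℤ) where
  carrier := {x | ∀ i, (a : ℤ) ∣ x i}
  add_mem' := by intro p q hp hq i; exact dvd_add (hp i) (hq i)
  zero_mem' := by intro i; simp
  smul_mem' := by intro c x hx i; exact (hx i).mul_left c

namespace ToroidAux

/-- the canonical translation vector attached to a sign vector -/
def tvec {n : ℕ} (x : Fin n → ℤˣ) : Fin n → ℤ := fun i => if x i = 1 then 0 else -1

lemma tvec_flip {n : ℕ} (x : Fin n → ℤˣ) (k : Fin n) :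
    tvec (flipAt x k) = tvec x - (x k : ℤ) • Pi.single k 1 := by
  funext i
  by_cases h : i = k
  · subst h
    rcases Int.units_eq_one_or (x i) with hx | hx <;>
      simp [tvec, flipAt, hx, Pi.single_apply]
  · simp [tvec, flipAt, Function.update_of_ne h, Pi.single_apply, h]

variable {n : ℕ} {Λ : Submodule ℤ (Fin n → ℤ)} (hn : 2 ≤ n)

def Reach (Φ : TFlag n Λ) : Prop :=
  ∃ L : List ℕ, (∀ i ∈ L, 1 ≤ i ∧ i ≤ n) ∧
    Φ = L.foldr (fun i Ψ => rGen Λ hn i Ψ)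
      ((1 : Equiv.Perm (Fin n)), fun _ => (1 : ℤˣ), (0 : (Fin n → ℤ) ⧸ Λ))

lemma reach_base : Reach (Λ := Λ) hn ((1 : Equiv.Perm (Fin n)), fun _ => (1 : ℤˣ), 0) :=
  ⟨[], by simp, rfl⟩

lemma reach_step {Φ : TFlag n Λ} {i : ℕ} (h1 : 1 ≤ i) (h2 : i ≤ n)
    (h : Reach hn Φ) : Reach hn (rGen Λ hn i Φ) := by
  obtain ⟨L, hL, rfl⟩ := h
  refine ⟨i :: L, ?_, rfl⟩
  intro j hj
  rcases List.mem_cons.mp hj with rfl | hj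
  · exact ⟨h1, h2⟩
  · exact hL j hj

lemma rGen_mid {i : ℕ} (h1 : 1 ≤ i) (h2 : i ≤ n - 1) (Φ : TFlag n Λ) :
    rGen Λ hn i Φ =
      (Equiv.swap (⟨i - 1, by omega⟩ : Fin n) ⟨i, by omega⟩ * Φ.1, Φ.2.1, Φ.2.2) := by
  have : i ≠ 0 := by omega
  simp [rGen, this, h1, h2]

lemma rGen_last (Φ : TFlag n Λ) :
    rGen Λ hn n Φ =
      (Φ.1, flipAt Φ.2.1 (Φ.1 ⟨n - 1, by omega⟩),
        Φ.2.2 - ((Φ.2.1 (Φ.1 ⟨n - 1, by omega⟩) : ℤ)) • eQ Λ (Φ.1 ⟨n - 1, by omega⟩)) := by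
  have h0 : n ≠ 0 := by omega
  have h1 : ¬ (1 ≤ n ∧ n ≤ n - 1) := by omega
  simp [rGen, h0, h1]

lemma closure_adjacent :
    Submonoid.closure
      (Set.range fun j : Fin (n - 1) =>
        Equiv.swap (⟨j, by omega⟩ : Fin n) ⟨(j : ℕ) + 1, by omega⟩) = ⊤ := by
  obtain ⟨m, rfl⟩ : ∃ m, n = m + 1 := ⟨n - 1, by omega⟩
  have h := Equiv.Perm.mclosure_swap_castSucc_succ m
  rw [← h]
  congr 1

lemma reach_perm (σ : Equiv.Perm (Fin n)) {Φ : TFlag n Λ} (h : Reach hn Φ) :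
    Reach hn (σ * Φ.1, Φ.2.1, Φ.2.2) := by
  have hσ : σ ∈ Submonoid.closure
      (Set.range fun j : Fin (n - 1) =>
        Equiv.swap (⟨j, by omega⟩ : Fin n) ⟨(j : ℕ) + 1, by omega⟩) := by
    rw [closure_adjacent hn]; trivial
  have key : ∀ Ψ : TFlag n Λ, Reach hn Ψ → Reach hn (σ * Ψ.1, Ψ.2.1, Ψ.2.2) := by
    refine Submonoid.closure_induction
      (motive := fun g _ => ∀ Ψ : TFlag n Λ, Reach hn Ψ → Reach hn (g * Ψ.1, Ψ.2.1, Ψ.2.2))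
      ?_ ?_ ?_ hσ
    · rintro g ⟨j, rfl⟩ Ψ hΨ
      have h1 : 1 ≤ (j : ℕ) + 1 := by omega
      have h2 : (j : ℕ) + 1 ≤ n - 1 := by omega
      have h3 := reach_step hn h1 (by omega) hΨ
      rw [rGen_mid hn h1 h2] at h3
      convert h3 using 3
      simp
    · intro Ψ hΨ; simpa using hΨ
    · intro g g' _ _ hg hg' Ψ hΨ
      have := hg _ (hg' Ψ hΨ)
      simpa [mul_assoc] using this
  exact key Φ h

/-- sign vector given by a finset of "minus" positions -/
def xOf (s : Finset (Fin n)) : Fin n → ℤˣ := fun i => if i ∈ s then -1 else 1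

lemma reach_all (s : Finset (Fin n)) (σ : Equiv.Perm (Fin n)) :
    Reach hn ((σ, xOf s, Submodule.Quotient.mk (tvec (xOf s))) : TFlag n Λ) := by
  induction s using Finset.induction_on generalizing σ with
  | empty =>
      have h0 : (tvec (xOf (∅ : Finset (Fin n))) : Fin n → ℤ) = 0 := by
        funext i; simp [tvec, xOf]
      have := reach_perm hn σ (reach_base hn (Λ := Λ))
      rw [mul_one] at this
      have hx0 : xOf (∅ : Finset (Fin n)) = fun _ => 1 := by funext i; simp [xOf]
      rw [h0, hx0]
      simpa using this
  | @insert p s hp ih =>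
      set k : Fin n := ⟨n - 1, by omega⟩
      set τ : Equiv.Perm (Fin n) := Equiv.swap k p
      have hτ : τ k = p := Equiv.swap_apply_left k p
      have h1 := reach_step hn (i := n) (by omega) le_rfl (ih τ)
      rw [rGen_last hn] at h1
      simp only at h1
      rw [hτ] at h1
      have hx : flipAt (xOf s) p = xOf (insert p s) := by
        funext i
        by_cases h : i = p
        · subst h; simp [flipAt, xOf, hp]
        · simp [flipAt, xOf, Function.update_of_ne h, h]
      have hxp : ((xOf s p : ℤ)) = 1 := by simp [xOf, hp]
      have ht : Submodule.Quotient.mk (tvec (xOf s)) - ((xOf s p : ℤ)) • eQ Λ p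
          = (Submodule.Quotient.mk (tvec (xOf (insert p s))) : (Fin n → ℤ) ⧸ Λ) := by
        rw [← hx, tvec_flip, Submodule.Quotient.mk_sub, Submodule.Quotient.mk_smul, eQ]
      rw [ht, hx] at h1
      have h2 := reach_perm hn (σ * τ⁻¹) h1
      simpa [mul_assoc] using h2

lemma invariant {L : List ℕ} (hL : ∀ i ∈ L, 1 ≤ i ∧ i ≤ n) :
    (L.foldr (fun i Ψ => rGen Λ hn i Ψ)
      ((1 : Equiv.Perm (Fin n)), fun _ => (1 : ℤˣ), (0 : (Fin n → ℤ) ⧸ Λ))).2.2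
    = Submodule.Quotient.mk (tvec (L.foldr (fun i Ψ => rGen Λ hn i Ψ)
      ((1 : Equiv.Perm (Fin n)), fun _ => (1 : ℤˣ), (0 : (Fin n → ℤ) ⧸ Λ))).2.1) := by
  induction L with
  | nil =>
      have : (tvec (fun _ => (1 : ℤˣ)) : Fin n → ℤ) = 0 := by funext i; simp [tvec]
      simp [this]
  | cons i L ih =>
      have hiL := hL i (by simp)
      have hL' : ∀ j ∈ L, 1 ≤ j ∧ j ≤ n := fun j hj => hL j (by simp [hj])
      set Ψ := L.foldr (fun i Ψ => rGen Λ hn i Ψ)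
        ((1 : Equiv.Perm (Fin n)), fun _ => (1 : ℤˣ), (0 : (Fin n → ℤ) ⧸ Λ)) with hΨ
      have ihΨ := ih hL'
      show (rGen Λ hn i Ψ).2.2 = Submodule.Quotient.mk (tvec (rGen Λ hn i Ψ).2.1)
      by_cases hmid : i ≤ n - 1
      · rw [rGen_mid hn hiL.1 hmid]; exact ihΨ
      · have : i = n := by omega
        subst this
        rw [rGen_last hn]
        simp only
        rw [ihΨ, tvec_flip, Submodule.Quotient.mk_sub, Submodule.Quotient.mk_smul, eQ]

end ToroidAux

/-- **Lemma 5.1** (combinatorial form): a flag `Φ = (σ, x, t)` of the toroid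
`{4,3^{n−2},4}/aℤⁿ` (with `a` even, `a ≥ 3`) lies in the orbit of the base flag
`((1), 𝟙, 0)` under the subgroup generated by `r₁, …, rₙ` — that is, `Φ` contains the
base vertex — if and only if each `tᵢ ∈ {0, −1}` with `tᵢ = −1` exactly when `xᵢ = −1`,
i.e. `t` is the class of the vector `i ↦ (if xᵢ = 1 then 0 else −1)`. -/
theorem orbit_of_base_vertex_iff (n a : ℕ) (hn : 2 ≤ n) (ha : Even a) (ha3 : 3 ≤ a)
    (Φ : TFlag n (dvdLattice n a)) :
    (∃ L : List ℕ, (∀ i ∈ L, 1 ≤ i ∧ i ≤ n) ∧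
        Φ = L.foldr (fun i Ψ => rGen (dvdLattice n a) hn i Ψ)
          ((1 : Equiv.Perm (Fin n)), fun _ => (1 : ℤˣ),
            (0 : (Fin n → ℤ) ⧸ dvdLattice n a))) ↔
      Φ.2.2 = Submodule.Quotient.mk (fun i => if Φ.2.1 i = 1 then 0 else -1) := by
  constructor
  · rintro ⟨L, hL, rfl⟩
    exact ToroidAux.invariant hn hL
  · intro ht
    set s : Finset (Fin n) := Finset.univ.filter (fun i => Φ.2.1 i = -1) with hs
    have hx : Φ.2.1 = ToroidAux.xOf s := by
      funext i
      rcases Int.units_eq_one_or (Φ.2.1 i) with h | h <;>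
        simp [ToroidAux.xOf, hs, h]
    have ht'' : Φ.2.2 = Submodule.Quotient.mk (ToroidAux.tvec Φ.2.1) := ht
    have key := ToroidAux.reach_all (Λ := dvdLattice n a) hn s Φ.1
    rw [← hx, ← ht''] at key
    exact key
end

section
/- Let a ≥ 6n+1 and Λ = aℤⁿ. Let v₀ = (1,2,…,n) and for σ ∈ Sₙ, x ∈ {±1}ⁿ set v(σ,x) = x·(σv₀) ∈ ℤⁿ/Λ. Then for any fixed i with 1 ≤ |i| ≤ 3, the map (σ, x) ↦ i·v(σ, x) from Sₙ × {±1}ⁿ to ℤⁿ/Λ is injective. Consequently, if Φ₁ = (σ₁, x₁, t) and Φ₂ = (σ₂, x₂, t) are distinct flags with the same facet t, then ηⁱΦ₁ and ηⁱΦ₂ have different facets. -/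
/-- The vector `v(σ, x) = x·(σv₀)` where `v₀ = (1, 2, …, n)`: the entries of `v₀` are
permuted by `σ` and then the signs are changed according to `x`. -/
def vVec {n : ℕ} (σ : Equiv.Perm (Fin n)) (x : Fin n → ℤˣ) : Fin n → ℤ :=
  fun k => ((x k : ℤ)) * (((σ⁻¹ k : Fin n) : ℕ) + 1)

/-- The permutation `η` of the flag set given by `η(σ, x, t) = (σ, x, t + v(σ, x))`. -/
noncomputable def etaPerm {n : ℕ} (Λ : Submodule ℤ (Fin n → ℤ)) : Equiv.Perm (TFlag n Λ) where
  toFun Φ := (Φ.1, Φ.2.1, Φ.2.2 + Submodule.Quotient.mk (vVec Φ.1 Φ.2.1))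
  invFun Φ := (Φ.1, Φ.2.1, Φ.2.2 - Submodule.Quotient.mk (vVec Φ.1 Φ.2.1))
  left_inv Φ := by obtain ⟨σ, x, t⟩ := Φ; simp
  right_inv Φ := by obtain ⟨σ, x, t⟩ := Φ; simp

lemma etaPerm_zpow {n : ℕ} (Λ : Submodule ℤ (Fin n → ℤ)) (i : ℤ)
    (σ : Equiv.Perm (Fin n)) (x : Fin n → ℤˣ) (t : (Fin n → ℤ) ⧸ Λ) :
    (etaPerm Λ ^ i) (σ, x, t) = (σ, x, t + i • Submodule.Quotient.mk (vVec σ x)) := by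
  induction i using Int.induction_on generalizing t with
  | zero => simp
  | succ k ih =>
      have h : etaPerm Λ ^ ((k : ℤ) + 1) = etaPerm Λ ^ (k : ℤ) * etaPerm Λ := by
        rw [zpow_add_one]
      rw [h, Equiv.Perm.mul_apply]
      show (etaPerm Λ ^ (k:ℤ)) (σ, x, t + Submodule.Quotient.mk (vVec σ x)) = _
      rw [ih]
      congr 2
      rw [add_smul, one_smul]
      abel
  | pred k ih =>
      have h : etaPerm Λ ^ (-(k : ℤ) - 1) = etaPerm Λ ^ (-(k : ℤ)) * (etaPerm Λ)⁻¹ := by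
        rw [zpow_sub_one]
      rw [h, Equiv.Perm.mul_apply]
      show (etaPerm Λ ^ (-(k:ℤ))) (σ, x, t - Submodule.Quotient.mk (vVec σ x)) = _
      rw [ih]
      congr 2
      rw [sub_smul, one_smul]
      abel

/-- For `Λ = aℤⁿ` with `a ≥ 6n+1` and a fixed integer `i` with `1 ≤ |i| ≤ 3`, the map
`(σ, x) ↦ i·v(σ, x)` into `ℤⁿ/Λ` is injective. Consequently, if `Φ₁ = (σ₁, x₁, t)` and
`Φ₂ = (σ₂, x₂, t)` are distinct flags with the same facet `t`, then `ηⁱΦ₁` and `ηⁱΦ₂`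
have different facets. -/
theorem eta_separates_flags_of_a_facet (n a : ℕ) (hn : 2 ≤ n) (ha : 6 * n + 1 ≤ a)
    (i : ℤ) (hi1 : 1 ≤ |i|) (hi3 : |i| ≤ 3) :
    Function.Injective (fun p : Equiv.Perm (Fin n) × (Fin n → ℤˣ) =>
      (i • Submodule.Quotient.mk (vVec p.1 p.2) :
        (Fin n → ℤ) ⧸ dvdLattice n a)) ∧
    ∀ (σ₁ σ₂ : Equiv.Perm (Fin n)) (x₁ x₂ : Fin n → ℤˣ)
      (t : (Fin n → ℤ) ⧸ dvdLattice n a), (σ₁, x₁) ≠ (σ₂, x₂) →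
        ((etaPerm (dvdLattice n a) ^ i) (σ₁, x₁, t)).2.2 ≠
          ((etaPerm (dvdLattice n a) ^ i) (σ₂, x₂, t)).2.2 := by
  have hi0 : i ≠ 0 := by
    intro h; rw [h] at hi1; simp at hi1
  have hinj : Function.Injective (fun p : Equiv.Perm (Fin n) × (Fin n → ℤˣ) =>
      (i • Submodule.Quotient.mk (vVec p.1 p.2) :
        (Fin n → ℤ) ⧸ dvdLattice n a)) := by
    rintro ⟨σ₁, x₁⟩ ⟨σ₂, x₂⟩ h
    simp only at h
    rw [← Submodule.Quotient.mk_smul, ← Submodule.Quotient.mk_smul,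
      Submodule.Quotient.eq] at h
    have key : ∀ k, vVec σ₁ x₁ k = vVec σ₂ x₂ k := by
      intro k
      have hd : (a : ℤ) ∣ (i • vVec σ₁ x₁ - i • vVec σ₂ x₂) k := h k
      have hv1 : |vVec σ₁ x₁ k| ≤ n := by
        unfold vVec
        rw [abs_mul]
        have : |((x₁ k : ℤ))| = 1 := by
          rcases Int.units_eq_one_or (x₁ k) with h1 | h1 <;> rw [h1] <;> simp
        rw [this, one_mul]
        have := (σ₁⁻¹ k).isLt
        rw [abs_of_nonneg (by positivity)]
        exact_mod_cast Nat.succ_le_of_lt this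
      have hv2 : |vVec σ₂ x₂ k| ≤ n := by
        unfold vVec
        rw [abs_mul]
        have : |((x₂ k : ℤ))| = 1 := by
          rcases Int.units_eq_one_or (x₂ k) with h1 | h1 <;> rw [h1] <;> simp
        rw [this, one_mul]
        have := (σ₂⁻¹ k).isLt
        rw [abs_of_nonneg (by positivity)]
        exact_mod_cast Nat.succ_le_of_lt this
      have hbound : |(i • vVec σ₁ x₁ - i • vVec σ₂ x₂) k| < a := by
        have : (i • vVec σ₁ x₁ - i • vVec σ₂ x₂) k
            = i * vVec σ₁ x₁ k - i * vVec σ₂ x₂ k := by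
          simp [Pi.smul_apply, smul_eq_mul]
        rw [this]
        calc |i * vVec σ₁ x₁ k - i * vVec σ₂ x₂ k|
            ≤ |i * vVec σ₁ x₁ k| + |i * vVec σ₂ x₂ k| := abs_sub _ _
          _ = |i| * |vVec σ₁ x₁ k| + |i| * |vVec σ₂ x₂ k| := by rw [abs_mul, abs_mul]
          _ ≤ 3 * n + 3 * n :=
              add_le_add (mul_le_mul hi3 hv1 (abs_nonneg _) (by norm_num))
                (mul_le_mul hi3 hv2 (abs_nonneg _) (by norm_num))
          _ < a := by
              have : (6 * n + 1 : ℤ) ≤ a := by exact_mod_cast ha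
              linarith
      have hz : (i • vVec σ₁ x₁ - i • vVec σ₂ x₂) k = 0 :=
        Int.eq_zero_of_abs_lt_dvd hd hbound
      have : i * vVec σ₁ x₁ k = i * vVec σ₂ x₂ k := by
        have h' : i * vVec σ₁ x₁ k - i * vVec σ₂ x₂ k = 0 := by
          simpa [Pi.smul_apply, smul_eq_mul] using hz
        linarith
      exact mul_left_cancel₀ hi0 this
    -- from key, deduce σ₁ = σ₂ and x₁ = x₂
    have hm : ∀ k, ((σ₁⁻¹ k : Fin n) : ℕ) = ((σ₂⁻¹ k : Fin n) : ℕ) := by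
      intro k
      have hk := key k
      unfold vVec at hk
      have h1 : |((x₁ k : ℤ))| = 1 := by
        rcases Int.units_eq_one_or (x₁ k) with h1 | h1 <;> rw [h1] <;> simp
      have h2 : |((x₂ k : ℤ))| = 1 := by
        rcases Int.units_eq_one_or (x₂ k) with h1 | h1 <;> rw [h1] <;> simp
      have habs : (((σ₁⁻¹ k : Fin n) : ℕ) : ℤ) + 1 = (((σ₂⁻¹ k : Fin n) : ℕ) : ℤ) + 1 := by
        have := congrArg abs hk
        rw [abs_mul, abs_mul, h1, h2, one_mul, one_mul,
          abs_of_nonneg (by positivity), abs_of_nonneg (by positivity)] at this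
        exact this
      omega
    have hσ : σ₁ = σ₂ := by
      have : σ₁⁻¹ = σ₂⁻¹ := by
        ext k
        exact Fin.val_injective (hm k) ▸ rfl
      exact inv_injective this
    have hx : x₁ = x₂ := by
      funext k
      have hk := key k
      unfold vVec at hk
      rw [hm k] at hk
      have hne : ((((σ₂⁻¹ k : Fin n) : ℕ) : ℤ) + 1) ≠ 0 := by positivity
      have : ((x₁ k : ℤ)) = ((x₂ k : ℤ)) := mul_right_cancel₀ hne hk
      exact Units.ext this
    rw [hσ, hx]
  refine ⟨hinj, ?_⟩
  intro σ₁ σ₂ x₁ x₂ t hne heq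
  rw [etaPerm_zpow, etaPerm_zpow] at heq
  simp only at heq
  have : (i • Submodule.Quotient.mk (vVec σ₁ x₁) : (Fin n → ℤ) ⧸ dvdLattice n a)
      = i • Submodule.Quotient.mk (vVec σ₂ x₂) := by
    exact add_left_cancel heq
  exact hne (hinj this)
end

section
/- Let a ≥ 6n+1, Λ = aℤⁿ, v₀ = (1,2,…,n), and v(σ,x) = x·(σv₀). For i, j ∈ {±1, ±2, ±3} with i ≠ ±j, and for any σ₁, σ₂ ∈ Sₙ, x₁, x₂ ∈ {±1}ⁿ, we have i·v(σ₁, x₁) ≠ j·v(σ₂, x₂) in ℤⁿ/aℤⁿ. -/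
lemma key_lemma (n a : ℕ) (hn : 2 ≤ n) (ha : 6 * n + 1 ≤ a)
    (i j : ℤ) (hi1 : 1 ≤ |i|) (hi3 : |i| ≤ 3) (hj1 : 1 ≤ |j|) (hj3 : |j| ≤ 3)
    (σ₁ σ₂ : Equiv.Perm (Fin n)) (x₁ x₂ : Fin n → ℤˣ)
    (h : ∀ k, (a : ℤ) ∣ i * vVec σ₁ x₁ k - j * vVec σ₂ x₂ k) :
    |i| = |j| * (((σ₂⁻¹ (σ₁ ⟨0, by omega⟩) : Fin n) : ℕ) + 1) := by
  set k : Fin n := σ₁ ⟨0, by omega⟩ with hk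
  have hd := h k
  have h1 : σ₁⁻¹ k = ⟨0, by omega⟩ := Equiv.symm_apply_apply σ₁ _
  set m : ℕ := ((σ₂⁻¹ k : Fin n) : ℕ) with hm
  have hmn : m < n := Fin.is_lt _
  simp only [vVec, h1] at hd
  have hx1 : |(x₁ k : ℤ)| = 1 := by
    rcases Int.units_eq_one_or (x₁ k) with hu | hu <;> simp [hu]
  have hx2 : |(x₂ k : ℤ)| = 1 := by
    rcases Int.units_eq_one_or (x₂ k) with hu | hu <;> simp [hu]
  have hval : i * ((x₁ k : ℤ) * (0 + 1)) - j * ((x₂ k : ℤ) * (m + 1)) = 0 := by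
    refine Int.eq_zero_of_abs_lt_dvd hd ?_
    have b1 : |i * ((x₁ k : ℤ) * (0 + 1))| ≤ 3 := by
      simp only [abs_mul, hx1]; push_cast; simp [abs_one]; linarith
    have b2 : |j * ((x₂ k : ℤ) * (m + 1))| ≤ 3 * n := by
      rw [abs_mul, abs_mul, hx2]
      have : |((m : ℤ) + 1)| = (m : ℤ) + 1 := abs_of_nonneg (by positivity)
      rw [this]
      have hm1 : (m : ℤ) + 1 ≤ n := by exact_mod_cast hmn
      nlinarith [abs_nonneg j]
    have := abs_sub_abs_le_abs_sub (i * ((x₁ k : ℤ) * (0 + 1))) (j * ((x₂ k : ℤ) * (m + 1)))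
    have habs := abs_sub (i * ((x₁ k : ℤ) * (0 + 1))) (j * ((x₂ k : ℤ) * (m + 1)))
    have hcast : (6 : ℤ) * n + 1 ≤ a := by exact_mod_cast ha
    have hn' : (2 : ℤ) ≤ n := by exact_mod_cast hn
    calc |i * ((x₁ k : ℤ) * (0 + 1)) - j * ((x₂ k : ℤ) * (m + 1))|
        ≤ |i * ((x₁ k : ℤ) * (0 + 1))| + |j * ((x₂ k : ℤ) * (m + 1))| := abs_sub _ _
      _ < a := by linarith
  have : i * (x₁ k : ℤ) = j * (x₂ k : ℤ) * (m + 1) := by ring_nf; ring_nf at hval; linarith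
  have := congrArg abs this
  rwa [abs_mul, abs_mul, abs_mul, hx1, hx2, mul_one, mul_one,
    abs_of_nonneg (show (0:ℤ) ≤ (m:ℤ)+1 by positivity)] at this


/-- For `Λ = aℤⁿ` with `a ≥ 6n+1` and `i, j ∈ {±1, ±2, ±3}` with `i ≠ ±j`, the facets
`i·v(σ₁, x₁)` and `j·v(σ₂, x₂)` are always distinct in `ℤⁿ/aℤⁿ`. -/
theorem eta_powers_disjoint (n a : ℕ) (hn : 2 ≤ n) (ha : 6 * n + 1 ≤ a)
    (i j : ℤ) (hi1 : 1 ≤ |i|) (hi3 : |i| ≤ 3) (hj1 : 1 ≤ |j|) (hj3 : |j| ≤ 3)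
    (hij : i ≠ j) (hij' : i ≠ -j)
    (σ₁ σ₂ : Equiv.Perm (Fin n)) (x₁ x₂ : Fin n → ℤˣ) :
    (i • Submodule.Quotient.mk (vVec σ₁ x₁) : (Fin n → ℤ) ⧸ dvdLattice n a) ≠
      j • Submodule.Quotient.mk (vVec σ₂ x₂) := by
  intro h
  rw [← Submodule.Quotient.mk_smul, ← Submodule.Quotient.mk_smul,
    Submodule.Quotient.eq] at h
  have hdvd : ∀ k, (a : ℤ) ∣ i * vVec σ₁ x₁ k - j * vVec σ₂ x₂ k := by
    intro k
    have := h k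
    simpa using this
  have hdvd' : ∀ k, (a : ℤ) ∣ j * vVec σ₂ x₂ k - i * vVec σ₁ x₁ k := by
    intro k
    have := (hdvd k).neg_right
    simpa using this
  have h1 := key_lemma n a hn ha i j hi1 hi3 hj1 hj3 σ₁ σ₂ x₁ x₂ hdvd
  have h2 := key_lemma n a hn ha j i hj1 hj3 hi1 hi3 σ₂ σ₁ x₂ x₁ hdvd'
  set p : ℕ := ((σ₂⁻¹ (σ₁ ⟨0, by omega⟩) : Fin n) : ℕ)
  set q : ℕ := ((σ₁⁻¹ (σ₂ ⟨0, by omega⟩) : Fin n) : ℕ)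
  have hp : (0:ℤ) ≤ p := by positivity
  have hq : (0:ℤ) ≤ q := by positivity
  have hij2 : |i| = |j| := by nlinarith
  rcases abs_eq_abs.mp hij2 with h | h
  · exact hij h
  · exact hij' h
end

section
/- Let a ≥ 6n+1, Λ = aℤⁿ, and i, j ∈ {±1, ±2, ±3}. If i·v(σ₁, x₁) = j·v(σ₂, x₂) in ℤⁿ/aℤⁿ, then either (i = j, σ₁ = σ₂, x₁ = x₂) or (i = −j, σ₁ = σ₂, x₁ = −x₂). -/
/-- For `Λ = aℤⁿ` with `a ≥ 6n+1` and `i, j ∈ {±1, ±2, ±3}`: if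
`i·v(σ₁, x₁) = j·v(σ₂, x₂)` in `ℤⁿ/aℤⁿ`, then either `i = j`, `σ₁ = σ₂` and `x₁ = x₂`,
or `i = −j`, `σ₁ = σ₂` and `x₁ = −x₂`. -/
theorem eta_powers_equal_cases (n a : ℕ) (hn : 2 ≤ n) (ha : 6 * n + 1 ≤ a)
    (i j : ℤ) (hi1 : 1 ≤ |i|) (hi3 : |i| ≤ 3) (hj1 : 1 ≤ |j|) (hj3 : |j| ≤ 3)
    (σ₁ σ₂ : Equiv.Perm (Fin n)) (x₁ x₂ : Fin n → ℤˣ)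
    (h : (i • Submodule.Quotient.mk (vVec σ₁ x₁) : (Fin n → ℤ) ⧸ dvdLattice n a) =
      j • Submodule.Quotient.mk (vVec σ₂ x₂)) :
    (i = j ∧ σ₁ = σ₂ ∧ x₁ = x₂) ∨ (i = -j ∧ σ₁ = σ₂ ∧ x₁ = -x₂) := by
  have hi0 : i ≠ 0 := by
    intro hi; rw [hi] at hi1; simp at hi1
  -- pointwise equality over ℤ
  have hmem : i • vVec σ₁ x₁ - j • vVec σ₂ x₂ ∈ dvdLattice n a := by
    rw [← Submodule.Quotient.mk_smul, ← Submodule.Quotient.mk_smul] at h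
    exact (Submodule.Quotient.eq _).1 h
  have hbound : ∀ (σ : Equiv.Perm (Fin n)) (x : Fin n → ℤˣ) (k : Fin n),
      |vVec σ x k| ≤ (n : ℤ) := by
    intro σ x k
    have : |vVec σ x k| = (((σ⁻¹ k : Fin n) : ℕ) + 1 : ℤ) := by
      rw [vVec, abs_mul]
      rcases Int.units_eq_one_or (x k) with h1 | h1 <;> simp [h1] <;> positivity
    rw [this]
    have := (σ⁻¹ k).is_lt
    omega
  have hpt : ∀ k, i * vVec σ₁ x₁ k = j * vVec σ₂ x₂ k := by
    intro k
    have hd : (a : ℤ) ∣ i * vVec σ₁ x₁ k - j * vVec σ₂ x₂ k := hmem k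
    have h1 : |i * vVec σ₁ x₁ k| ≤ 3 * n := by
      rw [abs_mul]
      exact mul_le_mul hi3 (hbound σ₁ x₁ k) (abs_nonneg _) (by norm_num)
    have h2 : |j * vVec σ₂ x₂ k| ≤ 3 * n := by
      rw [abs_mul]
      exact mul_le_mul hj3 (hbound σ₂ x₂ k) (abs_nonneg _) (by norm_num)
    have hlt : |i * vVec σ₁ x₁ k - j * vVec σ₂ x₂ k| < (a : ℤ) := by
      have := abs_sub (i * vVec σ₁ x₁ k) (j * vVec σ₂ x₂ k)
      have ha' : (6 * n + 1 : ℤ) ≤ a := by exact_mod_cast ha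
      omega
    have := Int.eq_zero_of_abs_lt_dvd hd hlt
    omega
  -- absolute-value pointwise equality
  have habs : ∀ k, |i| * (((σ₁⁻¹ k : Fin n) : ℕ) + 1 : ℤ)
      = |j| * (((σ₂⁻¹ k : Fin n) : ℕ) + 1 : ℤ) := by
    intro k
    have h := congrArg abs (hpt k)
    rw [vVec, vVec, abs_mul, abs_mul, abs_mul, abs_mul] at h
    have e1 : |((x₁ k : ℤ))| = 1 := by
      rcases Int.units_eq_one_or (x₁ k) with h1 | h1 <;> simp [h1]
    have e2 : |((x₂ k : ℤ))| = 1 := by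
      rcases Int.units_eq_one_or (x₂ k) with h1 | h1 <;> simp [h1]
    rw [e1, e2, abs_of_nonneg (show (0:ℤ) ≤ (((σ₁⁻¹ k : Fin n) : ℕ) + 1 : ℤ) by positivity),
      abs_of_nonneg (show (0:ℤ) ≤ (((σ₂⁻¹ k : Fin n) : ℕ) + 1 : ℤ) by positivity)] at h
    linarith
  -- sum to get |i| = |j|
  have hsum : ∀ σ : Equiv.Perm (Fin n),
      ∑ k : Fin n, (((σ⁻¹ k : Fin n) : ℕ) + 1 : ℤ) = ∑ k : Fin n, ((k : ℕ) + 1 : ℤ) :=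
    fun σ => Equiv.sum_comp σ⁻¹ (fun k => ((k : ℕ) + 1 : ℤ))
  have hS : (0 : ℤ) < ∑ k : Fin n, ((k : ℕ) + 1 : ℤ) := by
    apply Finset.sum_pos
    · intro k _; positivity
    · exact ⟨⟨0, by omega⟩, Finset.mem_univ _⟩
  have hij : |i| = |j| := by
    have : |i| * ∑ k : Fin n, ((k : ℕ) + 1 : ℤ) = |j| * ∑ k : Fin n, ((k : ℕ) + 1 : ℤ) := by
      nth_rewrite 1 [← hsum σ₁]
      rw [← hsum σ₂, Finset.mul_sum, Finset.mul_sum]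
      exact Finset.sum_congr rfl fun k _ => habs k
    exact mul_right_cancel₀ (ne_of_gt hS) this
  -- σ₁ = σ₂
  have hσ : σ₁ = σ₂ := by
    have hinv : σ₁⁻¹ = σ₂⁻¹ := by
      ext k
      have h := habs k
      rw [hij] at h
      have h' := mul_left_cancel₀ (show |j| ≠ 0 by omega) h
      have h'' : ((σ₁⁻¹ k : Fin n) : ℕ) = ((σ₂⁻¹ k : Fin n) : ℕ) := by
        exact_mod_cast add_right_cancel h'
      exact h''
    exact inv_injective hinv
  -- i * x₁ k = j * x₂ k
  have hx : ∀ k, i * (x₁ k : ℤ) = j * (x₂ k : ℤ) := by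
    intro k
    have h := hpt k
    rw [vVec, vVec, hσ] at h
    have hc : (((σ₂⁻¹ k : Fin n) : ℕ) + 1 : ℤ) ≠ 0 := by positivity
    apply mul_right_cancel₀ hc
    linarith [h]
  rcases abs_eq_abs.mp hij with hij' | hij'
  · left
    refine ⟨hij', hσ, funext fun k => Units.ext ?_⟩
    have := hx k
    rw [hij'] at this
    have hj0 : j ≠ 0 := fun hj => by rw [hj] at hj1; simp at hj1
    exact mul_left_cancel₀ hj0 this
  · right
    refine ⟨hij', hσ, funext fun k => Units.ext ?_⟩
    have := hx k
    rw [hij'] at this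
    have hj0 : (-j : ℤ) ≠ 0 := by intro hj; rw [show j = 0 by omega] at hj1; simp at hj1
    have : (-j) * (x₁ k : ℤ) = (-j) * (-(x₂ k : ℤ)) := by linarith
    have := mul_left_cancel₀ hj0 this
    simpa using this
end
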